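/- Let m ∈ ℕ and let e_1, …, e_m be the standard orthonormal basis of ℝ^m. Write c_i = e_i∧ − ι_{e_i} and ĉ_i = e_i∧ + ι_{e_i} for the Clifford operators on the exterior algebra Λ(ℝ^m), let ε be the parity involution of Λ(ℝ^m) (the algebra automorphism induced by v ↦ −v), and define the supertrace of a linear endomorphism A of Λ(ℝ^m) by str(A) = trace(ε ∘ A). For subsets I, I' ⊆ {1, …, m}, let c(e^I) denote the composition of the c_i for i ∈ I taken in increasing order of indices, and similarly ĉ(e^{I'}). Then str(c(e^I) ∘ ĉ(e^{I'})) = (−1)^{m(m+1)/2} · 2^m if I = I' = {1, …, m}, and str(c(e^I) ∘ ĉ(e^{I'})) = 0 otherwise. -/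

import Mathlib

set_option maxHeartbeats 1000000


noncomputable section

variable (m : ℕ)

/-- The standard basis vectors of `ℝ^m`. -/
def stdVec (i : Fin m) : EuclideanSpace ℝ (Fin m) := EuclideanSpace.single i 1

/-- Left exterior multiplication on `Λ(ℝ^m)`. -/
def wedgeMul (v : EuclideanSpace ℝ (Fin m)) :
    Module.End ℝ (ExteriorAlgebra ℝ (EuclideanSpace ℝ (Fin m))) :=
  LinearMap.mulLeft ℝ (ExteriorAlgebra.ι ℝ v)

/-- Interior multiplication (contraction) with `v`, via the inner product. -/
def interiorMul (v : EuclideanSpace ℝ (Fin m)) :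
    Module.End ℝ (ExteriorAlgebra ℝ (EuclideanSpace ℝ (Fin m))) :=
  CliffordAlgebra.contractLeft (Q := (0 : QuadraticForm ℝ (EuclideanSpace ℝ (Fin m))))
    ((innerSL ℝ v).toLinearMap)

/-- The Clifford operator `c_i = e_i∧ − ι_{e_i}`. -/
def cOp (i : Fin m) : Module.End ℝ (ExteriorAlgebra ℝ (EuclideanSpace ℝ (Fin m))) :=
  wedgeMul m (stdVec m i) - interiorMul m (stdVec m i)

/-- The Clifford operator `ĉ_i = e_i∧ + ι_{e_i}`. -/
def cHatOp (i : Fin m) : Module.End ℝ (ExteriorAlgebra ℝ (EuclideanSpace ℝ (Fin m))) :=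
  wedgeMul m (stdVec m i) + interiorMul m (stdVec m i)

/-- `c(e^I)`: the composition of the `c_i`, `i ∈ I`, in increasing order of indices. -/
def cMonomial (I : Finset (Fin m)) :
    Module.End ℝ (ExteriorAlgebra ℝ (EuclideanSpace ℝ (Fin m))) :=
  ((I.sort (· ≤ ·)).map (cOp m)).prod

/-- `ĉ(e^{I'})`: the composition of the `ĉ_i`, `i ∈ I'`, in increasing order of indices. -/
def cHatMonomial (I : Finset (Fin m)) :
    Module.End ℝ (ExteriorAlgebra ℝ (EuclideanSpace ℝ (Fin m))) :=
  ((I.sort (· ≤ ·)).map (cHatOp m)).prod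

/-- The parity involution `ε` of `Λ(ℝ^m)`: the algebra automorphism induced by `v ↦ -v`. -/
def parityInvolution :
    Module.End ℝ (ExteriorAlgebra ℝ (EuclideanSpace ℝ (Fin m))) :=
  (CliffordAlgebra.involute
      (Q := (0 : QuadraticForm ℝ (EuclideanSpace ℝ (Fin m))))).toLinearMap

/-- The supertrace `str A = trace (ε ∘ A)`. -/
def str (A : Module.End ℝ (ExteriorAlgebra ℝ (EuclideanSpace ℝ (Fin m)))) : ℝ :=
  LinearMap.trace ℝ _ (parityInvolution m ∘ₗ A)

namespace Stmt8Aux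

open ExteriorAlgebra Finsupp

abbrev Fm (m : ℕ) := Finset (Fin m) →₀ ℝ

variable (m : ℕ)

def sgn (i : Fin m) (S : Finset (Fin m)) : ℝ := (-1) ^ (S.filter (· < i)).card

def aOp (i : Fin m) : Module.End ℝ (Fm m) :=
  Finsupp.linearCombination ℝ
    (fun S => if i ∈ S then 0 else sgn m i S • Finsupp.single (insert i S) 1)

lemma aOp_single (i : Fin m) (S : Finset (Fin m)) (c : ℝ) :
    aOp m i (Finsupp.single S c) =
      if i ∈ S then 0 else (c * sgn m i S) • Finsupp.single (insert i S) 1 := by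
  rw [aOp, Finsupp.linearCombination_single]
  split_ifs <;> simp [smul_smul]

lemma filter_insert_card (i j : Fin m) (S : Finset (Fin m)) (h : j ∉ S) :
    ((insert j S).filter (· < i)).card
      = (S.filter (· < i)).card + if j < i then 1 else 0 := by
  rw [Finset.filter_insert]
  split_ifs with hj
  · rw [Finset.card_insert_of_notMem (by simp [h])]
  · simp

lemma sgn_swap {i j : Fin m} (hij : i ≠ j) (S : Finset (Fin m)) (hi : i ∉ S) (hj : j ∉ S) :
    sgn m j S * sgn m i (insert j S) = -(sgn m i S * sgn m j (insert i S)) := by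
  unfold sgn
  rw [filter_insert_card m i j S hj, filter_insert_card m j i S hi]
  rcases hij.lt_or_gt with h | h
  · rw [if_pos h, if_neg (asymm h)]
    ring
  · rw [if_neg (asymm h), if_pos h]
    ring

lemma aOp_anticomm (i j : Fin m) : aOp m i * aOp m j = -(aOp m j * aOp m i) := by
  apply Finsupp.lhom_ext'
  intro S
  apply LinearMap.ext_ring
  simp only [LinearMap.comp_apply, LinearMap.neg_apply, Module.End.mul_apply]
  by_cases hj : j ∈ S <;> by_cases hi : i ∈ S
  · simp [aOp_single, hi, hj]
  · simp [aOp_single, hi, hj]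
  · simp [aOp_single, hi, hj]
  · rcases eq_or_ne i j with rfl | hij
    · simp [aOp_single, hi]
    · simp only [Finsupp.lsingle_apply]
      rw [aOp_single, aOp_single, if_neg hi, if_neg hj, one_mul, one_mul,
        map_smul, map_smul, aOp_single, aOp_single,
        if_neg (by simp [hi, hij] : ¬ i ∈ insert j S),
        if_neg (by simp [hj, hij.symm] : ¬ j ∈ insert i S),
        Finset.insert_comm, one_mul, one_mul, smul_smul, smul_smul,
        sgn_swap m hij S hi hj, neg_smul]


/-- helper: the annihilation-free creation rep vector map. -/
def AvL : EuclideanSpace ℝ (Fin m) →ₗ[ℝ] Module.End ℝ (Fm m) where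
  toFun v := ∑ j, v j • aOp m j
  map_add' v w := by
    simp only [PiLp.add_apply, add_smul, Finset.sum_add_distrib]
  map_smul' c v := by
    simp only [PiLp.smul_apply, smul_eq_mul, mul_smul, RingHom.id_apply, Finset.smul_sum]

lemma AvL_apply (v : EuclideanSpace ℝ (Fin m)) : AvL m v = ∑ j, v j • aOp m j := rfl

lemma end_sum_sq_zero {N : Type*} [AddCommGroup N] [Module ℝ N] {n : ℕ}
    (f : Fin n → Module.End ℝ N) (h : ∀ j k, f j * f k = -(f k * f j)) :
    (∑ j, f j) * (∑ k, f k) = 0 := by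
  have key : (∑ j, f j) * (∑ k, f k) = -((∑ j, f j) * (∑ k, f k)) := by
    rw [Finset.sum_mul_sum]
    calc (∑ j, ∑ k, f j * f k)
        = ∑ j, ∑ k, -(f k * f j) :=
          Finset.sum_congr rfl fun j _ => Finset.sum_congr rfl fun k _ => h j k
      _ = -∑ j, ∑ k, f k * f j := by simp
      _ = -∑ k, ∑ j, f k * f j := by rw [Finset.sum_comm]
  have h2 : (∑ j, f j) * (∑ k, f k) + (∑ j, f j) * (∑ k, f k) = 0 := by
    nth_rewrite 2 [key]
    abel
  have h3 : (2 : ℝ) • ((∑ j, f j) * (∑ k, f k)) = 0 := by rw [two_smul]; exact h2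
  rcases smul_eq_zero.mp h3 with h' | h'
  · norm_num at h'
  · exact h'

lemma AvL_sq (v : EuclideanSpace ℝ (Fin m)) : AvL m v * AvL m v = 0 := by
  rw [AvL_apply]
  refine end_sum_sq_zero _ fun j k => ?_
  rw [smul_mul_smul_comm, smul_mul_smul_comm, aOp_anticomm m j k, mul_comm (v j)]
  module

def rep : ExteriorAlgebra ℝ (EuclideanSpace ℝ (Fin m)) →ₐ[ℝ] Module.End ℝ (Fm m) :=
  ExteriorAlgebra.lift ℝ ⟨AvL m, AvL_sq m⟩

lemma rep_ι (v : EuclideanSpace ℝ (Fin m)) :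
    rep m (ExteriorAlgebra.ι ℝ v) = AvL m v := ExteriorAlgebra.lift_ι_apply ℝ _ _ _

lemma rep_ι_std (i : Fin m) :
    rep m (ExteriorAlgebra.ι ℝ (stdVec m i)) = aOp m i := by
  rw [rep_ι]
  show ∑ j, (EuclideanSpace.single i (1:ℝ)) j • aOp m j = aOp m i
  have : ∀ j, (EuclideanSpace.single i (1:ℝ)) j • aOp m j
      = if j = i then aOp m j else 0 := by
    intro j
    rw [EuclideanSpace.single_apply]
    split_ifs <;> simp
  rw [Finset.sum_congr rfl fun j _ => this j, Finset.sum_ite_eq' Finset.univ i]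
  simp


def Phi : ExteriorAlgebra ℝ (EuclideanSpace ℝ (Fin m)) →ₗ[ℝ] Fm m where
  toFun x := rep m x (Finsupp.single ∅ 1)
  map_add' x y := by simp
  map_smul' c x := by simp

lemma Phi_apply (x) : Phi m x = rep m x (Finsupp.single ∅ 1) := rfl

def pList (l : List (Fin m)) : ExteriorAlgebra ℝ (EuclideanSpace ℝ (Fin m)) :=
  (l.map (fun i => ExteriorAlgebra.ι ℝ (stdVec m i))).prod

@[simp] lemma pList_nil : pList m [] = 1 := rfl

lemma pList_cons (i : Fin m) (l : List (Fin m)) :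
    pList m (i :: l) = ExteriorAlgebra.ι ℝ (stdVec m i) * pList m l := by
  simp [pList]

def Psi : Fm m →ₗ[ℝ] ExteriorAlgebra ℝ (EuclideanSpace ℝ (Fin m)) :=
  Finsupp.linearCombination ℝ (fun S => pList m (S.sort (· ≤ ·)))

lemma Psi_single (S : Finset (Fin m)) (c : ℝ) :
    Psi m (Finsupp.single S c) = c • pList m (S.sort (· ≤ ·)) := by
  simp [Psi]

lemma rep_pList_sorted (l : List (Fin m)) (hl : l.Pairwise (· < ·)) :
    rep m (pList m l) (Finsupp.single ∅ 1) = Finsupp.single l.toFinset 1 := by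
  induction l with
  | nil => simp [pList]
  | cons i t ih =>
    have hts : t.Pairwise (· < ·) := hl.of_cons
    rw [pList_cons, map_mul, Module.End.mul_apply, ih hts, rep_ι_std, aOp_single]
    have hit : i ∉ t.toFinset := by
      simp only [List.mem_toFinset]
      intro hmem
      exact absurd (List.rel_of_pairwise_cons hl hmem) (lt_irrefl i)
    rw [if_neg hit]
    have : (t.toFinset.filter (· < i)).card = 0 := by
      rw [Finset.card_eq_zero, Finset.filter_eq_empty_iff]
      intro j hj
      exact asymm (List.rel_of_pairwise_cons hl (List.mem_toFinset.mp hj))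
    rw [sgn, this]
    simp

lemma Phi_Psi (y : Fm m) : Phi m (Psi m y) = y := by
  induction y using Finsupp.induction_linear with
  | zero => simp
  | add a b ha hb => simp [ha, hb]
  | single S c =>
    rw [Psi_single, map_smul, Phi_apply, rep_pList_sorted m _ ((Finset.sortedLT_sort S).pairwise)]
    rw [Finset.sort_toFinset]
    simp


lemma iota_anti (v w : EuclideanSpace ℝ (Fin m)) :
    ExteriorAlgebra.ι ℝ v * ExteriorAlgebra.ι ℝ w = -(ExteriorAlgebra.ι ℝ w * ExteriorAlgebra.ι ℝ v) := by
  have h := CliffordAlgebra.ι_mul_ι_add_swap (Q := (0 : QuadraticForm ℝ (EuclideanSpace ℝ (Fin m)))) v w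
  rw [QuadraticMap.polar] at h
  simp only [QuadraticMap.zero_apply, sub_zero, map_zero, sub_self] at h
  exact eq_neg_of_add_eq_zero_left h

lemma straighten (i : Fin m) (l : List (Fin m)) (hl : l.Pairwise (· < ·)) :
    ExteriorAlgebra.ι ℝ (stdVec m i) * pList m l =
      if i ∈ l then 0
      else ((-1 : ℝ) ^ (l.filter (· < i)).length) • pList m (List.orderedInsert (· ≤ ·) i l) := by
  induction l with
  | nil =>
    simp [List.orderedInsert, pList_cons]
  | cons a t ih =>
    rcases eq_or_ne i a with rfl | hia
    · rw [if_pos (List.mem_cons_self), pList_cons, ← mul_assoc,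
        ExteriorAlgebra.ι_sq_zero, zero_mul]
    rcases lt_or_gt_of_ne hia with hlt | hgt
    · have hmem : i ∉ a :: t := by
        intro hmem
        rcases List.mem_cons.mp hmem with rfl | hmem
        · exact hia rfl
        · exact absurd (hlt.trans (List.rel_of_pairwise_cons hl hmem)) (lt_irrefl i)
      rw [if_neg hmem]
      have hfil : (a :: t).filter (· < i) = [] := by
        rw [List.filter_eq_nil_iff]
        intro j hj
        rcases List.mem_cons.mp hj with rfl | hj
        · simp [asymm hlt]
        · have := hlt.trans (List.rel_of_pairwise_cons hl hj)
          simp [asymm this]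
      rw [hfil]
      have hins : List.orderedInsert (· ≤ ·) i (a :: t) = i :: a :: t := by
        simp [List.orderedInsert, le_of_lt hlt]
      rw [hins]
      simp [pList_cons]
    · -- a < i
      rw [pList_cons, ← mul_assoc, iota_anti, neg_mul, mul_assoc, ih hl.of_cons]
      have hins : List.orderedInsert (· ≤ ·) i (a :: t) = a :: List.orderedInsert (· ≤ ·) i t := by
        simp [List.orderedInsert, not_le.mpr hgt]
      by_cases hit : i ∈ t
      · rw [if_pos hit, if_pos (List.mem_cons_of_mem a hit)]
        simp
      · have hmem : i ∉ a :: t := by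
          simp [hia, hit]
        rw [if_neg hit, if_neg hmem, hins]
        have hfil : ((a :: t).filter (· < i)).length = (t.filter (· < i)).length + 1 := by
          rw [List.filter_cons_of_pos (by simpa using hgt)]
          simp
        rw [hfil, pList_cons]
        rw [mul_smul_comm]
        rw [pow_succ]
        rw [← neg_smul]
        ring_nf

lemma sort_insert_eq (i : Fin m) (S : Finset (Fin m)) (h : i ∉ S) :
    (insert i S).sort (· ≤ ·) = List.orderedInsert (· ≤ ·) i (S.sort (· ≤ ·)) := by
  refine List.Perm.eq_of_pairwise' (Finset.pairwise_sort _ _)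
    ((Finset.pairwise_sort S (· ≤ ·)).orderedInsert i _) ?_
  refine ((Finset.sort_perm_toList _ _).trans ?_).trans (List.perm_orderedInsert _ _ _).symm
  exact (Finset.toList_insert h).trans (List.Perm.cons i (Finset.sort_perm_toList _ _).symm)

lemma filter_card_eq (i : Fin m) (S : Finset (Fin m)) :
    ((S.sort (· ≤ ·)).filter (· < i)).length = (S.filter (· < i)).card := by
  set l := S.sort (· ≤ ·) with hl
  have hnd : l.Nodup := Finset.sort_nodup _ _
  have h1 : (l.filter (· < i)).toFinset = S.filter (· < i) := by
    rw [List.toFinset_filter, Finset.sort_toFinset]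
    simp
  rw [← h1, List.toFinset_card_of_nodup (hnd.filter _)]

lemma Psi_aOp (i : Fin m) (y : Fm m) :
    Psi m (aOp m i y) = ExteriorAlgebra.ι ℝ (stdVec m i) * Psi m y := by
  induction y using Finsupp.induction_linear with
  | zero => simp
  | add a b ha hb => simp [map_add, ha, hb, mul_add]
  | single S c =>
    rw [aOp_single, Psi_single]
    by_cases hiS : i ∈ S
    · rw [if_pos hiS]
      rw [mul_smul_comm, straighten m i _ ((Finset.sortedLT_sort S).pairwise),
        if_pos ((Finset.mem_sort _).mpr hiS)]
      simp
    · rw [if_neg hiS, map_smul, Psi_single, mul_smul_comm,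
        straighten m i _ ((Finset.sortedLT_sort S).pairwise),
        if_neg (fun hc => hiS ((Finset.mem_sort _).mp hc)),
        sort_insert_eq m i S hiS, filter_card_eq, sgn]
      rw [smul_smul, smul_smul, mul_comm]
      rw [one_mul]

lemma mulRight_of_iota_comm (T : Module.End ℝ (ExteriorAlgebra ℝ (EuclideanSpace ℝ (Fin m))))
    (h : ∀ (v : EuclideanSpace ℝ (Fin m)) x,
      T (ExteriorAlgebra.ι ℝ v * x) = ExteriorAlgebra.ι ℝ v * T x) (x) :
    T x = x * T 1 := by
  have key : ∀ a x, T (a * x) = a * T x := by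
    intro a
    induction a using ExteriorAlgebra.induction with
    | algebraMap r =>
      intro x
      rw [← Algebra.smul_def, map_smul, ← Algebra.smul_def]
    | ι v => exact h v
    | mul a b ha hb =>
      intro x
      rw [mul_assoc, ha, hb, mul_assoc]
    | add a b ha hb =>
      intro x
      rw [add_mul, map_add, ha, hb, add_mul]
  have := key x 1
  rwa [mul_one] at this

lemma euclid_decomp (v : EuclideanSpace ℝ (Fin m)) : v = ∑ j, v j • stdVec m j := by
  have h1 := (PiLp.basisFun 2 ℝ (Fin m)).sum_repr v
  conv_lhs => rw [← h1]
  refine Finset.sum_congr rfl fun j _ => ?_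
  rw [PiLp.basisFun_repr, PiLp.basisFun_apply]
  rfl

lemma iota_decomp (v : EuclideanSpace ℝ (Fin m)) :
    ExteriorAlgebra.ι ℝ v = ∑ j, v j • ExteriorAlgebra.ι ℝ (stdVec m j) := by
  conv_lhs => rw [euclid_decomp m v]
  rw [map_sum]
  exact Finset.sum_congr rfl fun j _ => by rw [map_smul]

lemma Psi_Phi (x) : Psi m (Phi m x) = x := by
  have h : ∀ (v : EuclideanSpace ℝ (Fin m)) x,
      Psi m (Phi m (ExteriorAlgebra.ι ℝ v * x))
        = ExteriorAlgebra.ι ℝ v * Psi m (Phi m x) := by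
    intro v x
    rw [Phi_apply, map_mul, Module.End.mul_apply, rep_ι, ← Phi_apply, AvL_apply]
    rw [LinearMap.sum_apply]
    rw [map_sum]
    rw [iota_decomp, Finset.sum_mul]
    refine Finset.sum_congr rfl fun j _ => ?_
    rw [LinearMap.smul_apply, map_smul, Psi_aOp, smul_mul_assoc]
  have key := mulRight_of_iota_comm m (Psi m ∘ₗ Phi m) (fun v x => h v x) x
  simp only [LinearMap.comp_apply] at key
  have h1 : Phi m (1 : ExteriorAlgebra ℝ (EuclideanSpace ℝ (Fin m))) = Finsupp.single ∅ 1 := by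
    rw [Phi_apply, map_one]
    rfl
  rw [key, h1, Psi_single]
  simp [pList]

def extEquiv : Fm m ≃ₗ[ℝ] ExteriorAlgebra ℝ (EuclideanSpace ℝ (Fin m)) :=
  LinearEquiv.ofLinear (Psi m) (Phi m)
    (LinearMap.ext fun x => Psi_Phi m x) (LinearMap.ext fun y => Phi_Psi m y)

instance : Module.Finite ℝ (ExteriorAlgebra ℝ (EuclideanSpace ℝ (Fin m))) :=
  Module.Finite.equiv (extEquiv m)

lemma finrank_ext :
    Module.finrank ℝ (ExteriorAlgebra ℝ (EuclideanSpace ℝ (Fin m))) = 2 ^ m := by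
  rw [← (extEquiv m).finrank_eq]
  rw [Module.finrank_finsupp_self]
  rw [Fintype.card_finset, Fintype.card_fin]


----------------------------------------------------------------
-- Part B : operator relations
----------------------------------------------------------------

lemma wedge_apply (v : EuclideanSpace ℝ (Fin m)) (x) :
    wedgeMul m v x = ExteriorAlgebra.ι ℝ v * x := rfl

lemma inter_apply (v : EuclideanSpace ℝ (Fin m)) (x) :
    interiorMul m v x
      = CliffordAlgebra.contractLeft (Q := (0 : QuadraticForm ℝ (EuclideanSpace ℝ (Fin m))))
          ((innerSL ℝ v).toLinearMap) x := rfl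

lemma wedge_anti (v w : EuclideanSpace ℝ (Fin m)) :
    wedgeMul m v * wedgeMul m w = -(wedgeMul m w * wedgeMul m v) := by
  refine LinearMap.ext fun x => ?_
  simp only [Module.End.mul_apply, LinearMap.neg_apply, wedge_apply]
  rw [← mul_assoc, ← mul_assoc, iota_anti, neg_mul]

lemma inter_anti (v w : EuclideanSpace ℝ (Fin m)) :
    interiorMul m v * interiorMul m w = -(interiorMul m w * interiorMul m v) := by
  refine LinearMap.ext fun x => ?_
  simp only [Module.End.mul_apply, LinearMap.neg_apply, inter_apply]
  exact CliffordAlgebra.contractLeft_comm _ _ x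

lemma inter_wedge (v w : EuclideanSpace ℝ (Fin m)) :
    interiorMul m v * wedgeMul m w + wedgeMul m w * interiorMul m v
      = (inner ℝ v w : ℝ) • (1 : Module.End ℝ (ExteriorAlgebra ℝ (EuclideanSpace ℝ (Fin m)))) := by
  refine LinearMap.ext fun x => ?_
  simp only [LinearMap.add_apply, Module.End.mul_apply, LinearMap.smul_apply,
    Module.End.one_apply, wedge_apply, inter_apply]
  rw [CliffordAlgebra.contractLeft_ι_mul]
  have : ((innerSL ℝ v).toLinearMap) w = (inner ℝ v w : ℝ) := rfl
  rw [this]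
  abel

lemma inner_std (i j : Fin m) :
    (inner ℝ (stdVec m i) (stdVec m j) : ℝ) = if i = j then 1 else 0 := by
  rw [stdVec, stdVec, EuclideanSpace.inner_single_left, EuclideanSpace.single_apply]
  split_ifs <;> simp_all

lemma quad_expand_mm {R : Type*} [Ring R] (A B A' B' k : R)
    (h1 : A * A' = -(A' * A)) (h2 : B * B' = -(B' * B))
    (h3 : B * A' + A' * B = k) (h4 : B' * A + A * B' = k) :
    (A - B) * (A' - B') + (A' - B') * (A - B) = -(k + k) := by
  have e : (A - B) * (A' - B') + (A' - B') * (A - B)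
      = (A * A' + A' * A) + (B * B' + B' * B) - (B * A' + A' * B) - (B' * A + A * B') := by
    noncomm_ring
  rw [e, h1, h2, h3, h4]
  noncomm_ring

lemma quad_expand_pp {R : Type*} [Ring R] (A B A' B' k : R)
    (h1 : A * A' = -(A' * A)) (h2 : B * B' = -(B' * B))
    (h3 : B * A' + A' * B = k) (h4 : B' * A + A * B' = k) :
    (A + B) * (A' + B') + (A' + B') * (A + B) = k + k := by
  have e : (A + B) * (A' + B') + (A' + B') * (A + B)
      = (A * A' + A' * A) + (B * B' + B' * B) + (B * A' + A' * B) + (B' * A + A * B') := by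
    noncomm_ring
  rw [e, h1, h2, h3, h4]
  abel

lemma quad_expand_mp {R : Type*} [Ring R] (A B A' B' k : R)
    (h1 : A * A' = -(A' * A)) (h2 : B * B' = -(B' * B))
    (h3 : B * A' + A' * B = k) (h4 : B' * A + A * B' = k) :
    (A - B) * (A' + B') + (A' + B') * (A - B) = 0 := by
  have e : (A - B) * (A' + B') + (A' + B') * (A - B)
      = (A * A' + A' * A) - (B * B' + B' * B) - (B * A' + A' * B) + (B' * A + A * B') := by
    noncomm_ring
  rw [e, h1, h2, h3, h4]
  noncomm_ring

lemma cc_add (i j : Fin m) :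
    cOp m i * cOp m j + cOp m j * cOp m i
      = -(((if i = j then (1:ℝ) else 0) • (1 : Module.End ℝ
          (ExteriorAlgebra ℝ (EuclideanSpace ℝ (Fin m)))))
          + ((if i = j then (1:ℝ) else 0) • (1 : Module.End ℝ
          (ExteriorAlgebra ℝ (EuclideanSpace ℝ (Fin m)))))) := by
  rw [cOp, cOp]
  refine quad_expand_mm _ _ _ _ _ (wedge_anti m _ _) (inter_anti m _ _) ?_ ?_
  · rw [inter_wedge, inner_std]
  · rw [inter_wedge, inner_std]
    rw [if_congr (Iff.intro Eq.symm Eq.symm) rfl rfl]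

lemma hh_add (i j : Fin m) :
    cHatOp m i * cHatOp m j + cHatOp m j * cHatOp m i
      = ((if i = j then (1:ℝ) else 0) • (1 : Module.End ℝ
          (ExteriorAlgebra ℝ (EuclideanSpace ℝ (Fin m)))))
          + ((if i = j then (1:ℝ) else 0) • (1 : Module.End ℝ
          (ExteriorAlgebra ℝ (EuclideanSpace ℝ (Fin m))))) := by
  rw [cHatOp, cHatOp]
  refine quad_expand_pp _ _ _ _ _ (wedge_anti m _ _) (inter_anti m _ _) ?_ ?_
  · rw [inter_wedge, inner_std]
  · rw [inter_wedge, inner_std]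
    rw [if_congr (Iff.intro Eq.symm Eq.symm) rfl rfl]

lemma ch_add (i j : Fin m) :
    cOp m i * cHatOp m j + cHatOp m j * cOp m i = 0 := by
  rw [cOp, cHatOp]
  refine quad_expand_mp _ _ _ _ ((if i = j then (1:ℝ) else 0) • (1 : Module.End ℝ
      (ExteriorAlgebra ℝ (EuclideanSpace ℝ (Fin m)))))
    (wedge_anti m _ _) (inter_anti m _ _) ?_ ?_
  · rw [inter_wedge, inner_std]
  · rw [inter_wedge, inner_std]
    rw [if_congr (Iff.intro Eq.symm Eq.symm) rfl rfl]

lemma cc_anti {i j : Fin m} (h : i ≠ j) :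
    cOp m i * cOp m j = -(cOp m j * cOp m i) := by
  have := cc_add m i j
  rw [if_neg h] at this
  simp only [zero_smul, add_zero, neg_zero] at this
  exact eq_neg_of_add_eq_zero_left this

lemma hh_anti {i j : Fin m} (h : i ≠ j) :
    cHatOp m i * cHatOp m j = -(cHatOp m j * cHatOp m i) := by
  have := hh_add m i j
  rw [if_neg h] at this
  simp only [zero_smul, add_zero] at this
  exact eq_neg_of_add_eq_zero_left this

lemma ch_anti (i j : Fin m) :
    cOp m i * cHatOp m j = -(cHatOp m j * cOp m i) :=
  eq_neg_of_add_eq_zero_left (ch_add m i j)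

lemma hc_anti (i j : Fin m) :
    cHatOp m i * cOp m j = -(cOp m j * cHatOp m i) := by
  have h := ch_anti m j i
  rw [eq_neg_iff_add_eq_zero] at h ⊢
  rw [add_comm]
  exact h

lemma c_sq (i : Fin m) :
    cOp m i * cOp m i
      = -(1 : Module.End ℝ (ExteriorAlgebra ℝ (EuclideanSpace ℝ (Fin m)))) := by
  have h := cc_add m i i
  rw [if_pos rfl, one_smul] at h
  have h2 : (2:ℝ) • (cOp m i * cOp m i) = (2:ℝ) • -(1 : Module.End ℝ
      (ExteriorAlgebra ℝ (EuclideanSpace ℝ (Fin m)))) := by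
    rw [two_smul, h, two_smul, neg_add]
  exact smul_right_injective _ (by norm_num) h2

lemma h_sq (i : Fin m) :
    cHatOp m i * cHatOp m i
      = (1 : Module.End ℝ (ExteriorAlgebra ℝ (EuclideanSpace ℝ (Fin m)))) := by
  have h := hh_add m i i
  rw [if_pos rfl, one_smul] at h
  have h2 : (2:ℝ) • (cHatOp m i * cHatOp m i) = (2:ℝ) • (1 : Module.End ℝ
      (ExteriorAlgebra ℝ (EuclideanSpace ℝ (Fin m)))) := by
    rw [two_smul, h, two_smul]
  exact smul_right_injective _ (by norm_num) h2

lemma eps_apply (x) :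
    parityInvolution m x
      = CliffordAlgebra.involute (Q := (0 : QuadraticForm ℝ (EuclideanSpace ℝ (Fin m)))) x := rfl

lemma eps_sq :
    parityInvolution m * parityInvolution m
      = (1 : Module.End ℝ (ExteriorAlgebra ℝ (EuclideanSpace ℝ (Fin m)))) := by
  refine LinearMap.ext fun x => ?_
  simp only [Module.End.mul_apply, Module.End.one_apply, eps_apply]
  exact CliffordAlgebra.involute_involute x

lemma eps_wedge (v : EuclideanSpace ℝ (Fin m)) :
    parityInvolution m * wedgeMul m v = -(wedgeMul m v * parityInvolution m) := by
  refine LinearMap.ext fun x => ?_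
  simp only [Module.End.mul_apply, LinearMap.neg_apply, eps_apply, wedge_apply]
  rw [map_mul]
  rw [CliffordAlgebra.involute_ι, neg_mul]

lemma eps_inter (v : EuclideanSpace ℝ (Fin m)) :
    parityInvolution m * interiorMul m v = -(interiorMul m v * parityInvolution m) := by
  have hT : ∀ x, (parityInvolution m * interiorMul m v
      + interiorMul m v * parityInvolution m) x = 0 := by
    intro x
    set T := parityInvolution m * interiorMul m v + interiorMul m v * parityInvolution m with hT
    have hcomm : ∀ (w : EuclideanSpace ℝ (Fin m)) y,
        T (ExteriorAlgebra.ι ℝ w * y) = ExteriorAlgebra.ι ℝ w * T y := by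
      intro w y
      simp only [hT, LinearMap.add_apply, Module.End.mul_apply, eps_apply, inter_apply]
      rw [CliffordAlgebra.contractLeft_ι_mul]
      rw [map_sub, map_smul, map_mul, CliffordAlgebra.involute_ι]
      rw [map_mul, CliffordAlgebra.involute_ι]
      simp only [neg_mul, map_neg, CliffordAlgebra.contractLeft_ι_mul, mul_add, neg_sub,
        sub_neg_eq_add]
      abel
    have := mulRight_of_iota_comm m T hcomm x
    rw [this]
    have h1 : T 1 = 0 := by
      simp only [hT, LinearMap.add_apply, Module.End.mul_apply, eps_apply, inter_apply]
      rw [CliffordAlgebra.contractLeft_one, map_one, CliffordAlgebra.contractLeft_one]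
      simp
    rw [h1, mul_zero]
  have : parityInvolution m * interiorMul m v + interiorMul m v * parityInvolution m = 0 :=
    LinearMap.ext fun x => hT x
  exact eq_neg_of_add_eq_zero_left this

lemma eps_c (i : Fin m) :
    parityInvolution m * cOp m i = -(cOp m i * parityInvolution m) := by
  rw [cOp, mul_sub, sub_mul, eps_wedge, eps_inter]
  module

lemma eps_h (i : Fin m) :
    parityInvolution m * cHatOp m i = -(cHatOp m i * parityInvolution m) := by
  rw [cHatOp, mul_add, add_mul, eps_wedge, eps_inter]
  module


----------------------------------------------------------------
-- Part C : commutation with products, trace lemmas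
----------------------------------------------------------------

lemma comm_pow {R : Type*} [Ring R] [Algebra ℝ R] (g : R) (l : List R)
    (h : ∀ a ∈ l, g * a = -(a * g)) :
    g * l.prod = ((-1 : ℝ) ^ l.length) • (l.prod * g) := by
  induction l with
  | nil => simp
  | cons a t ih =>
    rw [List.prod_cons, ← mul_assoc, h a (List.mem_cons_self), neg_mul, mul_assoc,
      ih (fun b hb => h b (List.mem_cons_of_mem a hb)), List.length_cons, pow_succ,
      mul_smul_comm, ← neg_smul]
    congr 1
    · ring
    · rw [mul_assoc]

lemma comm_pow' {R : Type*} [Ring R] [Algebra ℝ R] (g : R) (l : List R)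
    (h : ∀ a ∈ l, g * a = -(a * g)) :
    l.prod * g = ((-1 : ℝ) ^ l.length) • (g * l.prod) := by
  rw [comm_pow g l h, smul_smul, ← pow_add]
  have he : Even (l.length + l.length) := ⟨l.length, rfl⟩
  rw [he.neg_one_pow, one_smul]

lemma flip_anti {R : Type*} [Ring R] {a b : R} (h : a * b = -(b * a)) :
    b * a = -(a * b) := by
  rw [h, neg_neg]

lemma trace_conj_zero {V : Type*} [AddCommGroup V] [Module ℝ V] [Module.Finite ℝ V]
    (g A : Module.End ℝ V) (κ : ℝ) (hκ : κ ≠ 0)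
    (hg : g * g = κ • 1) (h : g * A = -(A * g)) :
    LinearMap.trace ℝ V A = 0 := by
  have t1 : LinearMap.trace ℝ V (g * (A * g)) = LinearMap.trace ℝ V ((A * g) * g) :=
    LinearMap.trace_mul_comm ℝ g (A * g)
  have e1 : (A * g) * g = κ • A := by
    rw [mul_assoc, hg, mul_smul_comm, mul_one]
  have e2 : g * (A * g) = -(κ • A) := by
    rw [← mul_assoc, h, neg_mul, mul_assoc, hg, mul_smul_comm, mul_one]
  rw [e1, e2, map_neg, map_smul] at t1
  have h2 : κ * LinearMap.trace ℝ V A = 0 := by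
    simp only [smul_eq_mul] at t1
    linarith
  exact (mul_eq_zero.mp h2).resolve_left hκ

lemma g_cMon (g : Module.End ℝ (ExteriorAlgebra ℝ (EuclideanSpace ℝ (Fin m))))
    (I : Finset (Fin m)) (h : ∀ j ∈ I, g * cOp m j = -(cOp m j * g)) :
    g * cMonomial m I = ((-1 : ℝ) ^ I.card) • (cMonomial m I * g) := by
  have hl : ((I.sort (· ≤ ·)).map (cOp m)).length = I.card := by
    rw [List.length_map, Finset.length_sort]
  rw [cMonomial, ← hl]
  refine comm_pow g _ fun a ha => ?_
  obtain ⟨j, hj, rfl⟩ := List.mem_map.mp ha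
  exact h j ((Finset.mem_sort _).mp hj)

lemma g_hMon (g : Module.End ℝ (ExteriorAlgebra ℝ (EuclideanSpace ℝ (Fin m))))
    (I : Finset (Fin m)) (h : ∀ j ∈ I, g * cHatOp m j = -(cHatOp m j * g)) :
    g * cHatMonomial m I = ((-1 : ℝ) ^ I.card) • (cHatMonomial m I * g) := by
  have hl : ((I.sort (· ≤ ·)).map (cHatOp m)).length = I.card := by
    rw [List.length_map, Finset.length_sort]
  rw [cHatMonomial, ← hl]
  refine comm_pow g _ fun a ha => ?_
  obtain ⟨j, hj, rfl⟩ := List.mem_map.mp ha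
  exact h j ((Finset.mem_sort _).mp hj)

lemma g_X (g : Module.End ℝ (ExteriorAlgebra ℝ (EuclideanSpace ℝ (Fin m))))
    (I I' : Finset (Fin m))
    (hc : ∀ j ∈ I, g * cOp m j = -(cOp m j * g))
    (hh : ∀ j ∈ I', g * cHatOp m j = -(cHatOp m j * g)) :
    g * (cMonomial m I * cHatMonomial m I')
      = ((-1 : ℝ) ^ (I.card + I'.card)) • (cMonomial m I * cHatMonomial m I' * g) := by
  rw [← mul_assoc, g_cMon m g I hc, smul_mul_assoc, mul_assoc, g_hMon m g I' hh,
    mul_smul_comm, smul_smul, ← pow_add, mul_assoc]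

----------------------------------------------------------------
-- Part D : the main-case computation
----------------------------------------------------------------

lemma E_neg_mul (A B : Module.End ℝ (ExteriorAlgebra ℝ (EuclideanSpace ℝ (Fin m)))) :
    -A * B = -(A * B) := neg_mul A B

lemma E_mul_neg (A B : Module.End ℝ (ExteriorAlgebra ℝ (EuclideanSpace ℝ (Fin m)))) :
    A * -B = -(A * B) := mul_neg A B

lemma E_smul_neg (c : ℝ) (A : Module.End ℝ (ExteriorAlgebra ℝ (EuclideanSpace ℝ (Fin m)))) :
    c • -A = -(c • A) := smul_neg c A

lemma E_neg_one_smul (A : Module.End ℝ (ExteriorAlgebra ℝ (EuclideanSpace ℝ (Fin m)))) :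
    (-1 : ℝ) • A = -A := neg_one_smul ℝ A

def dOp (i : Fin m) : Module.End ℝ (ExteriorAlgebra ℝ (EuclideanSpace ℝ (Fin m))) :=
  cOp m i * cHatOp m i

def dList (l : List (Fin m)) : Module.End ℝ (ExteriorAlgebra ℝ (EuclideanSpace ℝ (Fin m))) :=
  (l.map (dOp m)).prod

@[simp] lemma dList_nil : dList m [] = 1 := rfl

lemma dList_cons (a : Fin m) (t : List (Fin m)) :
    dList m (a :: t) = dOp m a * dList m t := by
  simp [dList]

lemma interleave (l : List (Fin m)) :
    (l.map (cOp m)).prod * (l.map (cHatOp m)).prod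
      = ((-1 : ℝ) ^ (l.length.choose 2)) • dList m l := by
  induction l with
  | nil => simp
  | cons a t ih =>
    rw [List.map_cons, List.map_cons, List.prod_cons, List.prod_cons, dList_cons]
    have h1 : (t.map (cOp m)).prod * cHatOp m a
        = ((-1 : ℝ) ^ t.length) • (cHatOp m a * (t.map (cOp m)).prod) := by
      have hlen : (t.map (cOp m)).length = t.length := List.length_map _
      rw [← hlen]
      refine comm_pow' (cHatOp m a) _ fun b hb => ?_
      obtain ⟨j, hj, rfl⟩ := List.mem_map.mp hb
      exact hc_anti m a j
    rw [mul_assoc (cOp m a), ← mul_assoc ((t.map (cOp m)).prod), h1,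
      smul_mul_assoc, mul_smul_comm, mul_assoc (cHatOp m a), ih, mul_smul_comm,
      mul_smul_comm, smul_smul, ← pow_add, ← mul_assoc (cOp m a)]
    congr 1
    · congr 1
      rw [List.length_cons, Nat.choose_succ_succ, Nat.choose_one_right, add_comm]

lemma wedge_eq (j : Fin m) :
    wedgeMul m (stdVec m j) = ((1:ℝ)/2) • (cOp m j + cHatOp m j) := by
  rw [cOp, cHatOp]
  module

lemma wedge_dOp_comm {i j : Fin m} (hij : j ≠ i) :
    wedgeMul m (stdVec m j) * dOp m i = dOp m i * wedgeMul m (stdVec m j) := by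
  have hc : cOp m j * dOp m i = dOp m i * cOp m j := by
    rw [dOp, ← mul_assoc, cc_anti (m := m) hij, E_neg_mul, mul_assoc, ch_anti m j i, E_mul_neg,
      neg_neg, ← mul_assoc]
  have hhh : cHatOp m j * dOp m i = dOp m i * cHatOp m j := by
    rw [dOp, ← mul_assoc, hc_anti m j i, E_neg_mul, mul_assoc, hh_anti (m := m) hij,
      E_mul_neg, neg_neg, ← mul_assoc]
  rw [wedge_eq, smul_mul_assoc, mul_smul_comm, add_mul, mul_add, hc, hhh]

lemma wedge_dOp_anti (j : Fin m) :
    wedgeMul m (stdVec m j) * dOp m j = -(dOp m j * wedgeMul m (stdVec m j)) := by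
  have e1 : cOp m j * (cOp m j * cHatOp m j) = -(cHatOp m j) := by
    rw [← mul_assoc, c_sq, E_neg_mul, one_mul]
  have e2 : cHatOp m j * (cOp m j * cHatOp m j) = -(cOp m j) := by
    rw [← mul_assoc, hc_anti m j j, E_neg_mul, mul_assoc, h_sq, mul_one]
  have e3 : (cOp m j * cHatOp m j) * cOp m j = cHatOp m j := by
    rw [mul_assoc, hc_anti m j j, E_mul_neg, ← mul_assoc, c_sq, E_neg_mul, one_mul, neg_neg]
  have e4 : (cOp m j * cHatOp m j) * cHatOp m j = cOp m j := by
    rw [mul_assoc, h_sq, mul_one]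
  have core : (cOp m j + cHatOp m j) * dOp m j = -(dOp m j * (cOp m j + cHatOp m j)) := by
    rw [add_mul, mul_add, dOp, e1, e2, e3, e4]
    abel
  rw [wedge_eq, smul_mul_assoc, core, mul_smul_comm, E_smul_neg]

lemma wedge_dList (j : Fin m) : ∀ (l : List (Fin m)), l.Nodup →
    wedgeMul m (stdVec m j) * dList m l
      = (if j ∈ l then (-1:ℝ) else 1) • (dList m l * wedgeMul m (stdVec m j))
  | [], _ => by simp
  | a :: t, hnd => by
    have hndt : t.Nodup := hnd.of_cons
    rcases eq_or_ne j a with rfl | hja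
    · have hjt : j ∉ t := (List.nodup_cons.mp hnd).1
      rw [dList_cons, ← mul_assoc, wedge_dOp_anti, E_neg_mul, mul_assoc,
        wedge_dList j t hndt, if_neg hjt, one_smul, if_pos (List.mem_cons_self),
        ← mul_assoc, E_neg_one_smul]
    · rw [dList_cons, ← mul_assoc, wedge_dOp_comm m hja, mul_assoc,
        wedge_dList j t hndt, mul_smul_comm, ← mul_assoc]
      congr 2
      simp [List.mem_cons, hja]

lemma dOp_one (a : Fin m) :
    dOp m a (1 : ExteriorAlgebra ℝ (EuclideanSpace ℝ (Fin m))) = -1 := by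
  rw [dOp, Module.End.mul_apply]
  have h1 : cHatOp m a (1 : ExteriorAlgebra ℝ (EuclideanSpace ℝ (Fin m)))
      = ExteriorAlgebra.ι ℝ (stdVec m a) := by
    rw [cHatOp, LinearMap.add_apply, wedge_apply, inter_apply, mul_one,
      CliffordAlgebra.contractLeft_one, add_zero]
  rw [h1, cOp, LinearMap.sub_apply, wedge_apply, inter_apply,
    ExteriorAlgebra.ι_sq_zero, CliffordAlgebra.contractLeft_ι, zero_sub]
  have h2 : ((innerSL ℝ (stdVec m a)).toLinearMap) (stdVec m a) = (1:ℝ) := by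
    have := inner_std m a a
    rw [if_pos rfl] at this
    exact this
  rw [h2, map_one]

lemma dList_one : ∀ (l : List (Fin m)),
    dList m l (1 : ExteriorAlgebra ℝ (EuclideanSpace ℝ (Fin m))) = ((-1:ℝ) ^ l.length) • 1
  | [] => by simp
  | a :: t => by
    rw [dList_cons, Module.End.mul_apply, dList_one t, map_smul, dOp_one,
      List.length_cons, pow_succ]
    rw [smul_neg, ← neg_smul]
    congr 1
    ring

lemma G_scalar :
    parityInvolution m * dList m (Finset.univ.sort (· ≤ ·))
      = ((-1:ℝ) ^ m) • (1 : Module.End ℝ (ExteriorAlgebra ℝ (EuclideanSpace ℝ (Fin m)))) := by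
  set l : List (Fin m) := Finset.univ.sort (· ≤ ·) with hl
  have hlen : l.length = m := by
    rw [hl, Finset.length_sort, Finset.card_univ, Fintype.card_fin]
  set G := parityInvolution m * dList m l with hG
  have hwG : ∀ j : Fin m, G * wedgeMul m (stdVec m j) = wedgeMul m (stdVec m j) * G := by
    intro j
    have hmem : j ∈ l := (Finset.mem_sort _).mpr (Finset.mem_univ j)
    have h1 := wedge_dList m j l (Finset.sort_nodup _ _)
    rw [if_pos hmem, E_neg_one_smul] at h1
    have h2 : dList m l * wedgeMul m (stdVec m j) = -(wedgeMul m (stdVec m j) * dList m l) :=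
      flip_anti h1
    rw [hG, mul_assoc, h2, E_mul_neg, ← mul_assoc, eps_wedge, E_neg_mul, neg_neg, mul_assoc]
  have hGi : ∀ (v : EuclideanSpace ℝ (Fin m)) x,
      G (ExteriorAlgebra.ι ℝ v * x) = ExteriorAlgebra.ι ℝ v * G x := by
    intro v x
    have hx : ExteriorAlgebra.ι ℝ v * x = ∑ j, v j • (wedgeMul m (stdVec m j) x) := by
      rw [iota_decomp m v, Finset.sum_mul]
      exact Finset.sum_congr rfl fun j _ => by rw [smul_mul_assoc, wedge_apply]
    rw [hx, map_sum]
    have : ∀ j, G (v j • (wedgeMul m (stdVec m j) x)) = v j • (ExteriorAlgebra.ι ℝ (stdVec m j) * G x) := by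
      intro j
      rw [map_smul]
      congr 1
      have := congrArg (fun (T : Module.End ℝ (ExteriorAlgebra ℝ (EuclideanSpace ℝ (Fin m)))) => T x) (hwG j)
      simp only [Module.End.mul_apply] at this
      rw [this, wedge_apply]
    rw [Finset.sum_congr rfl fun j _ => this j]
    rw [iota_decomp m v, Finset.sum_mul]
    exact Finset.sum_congr rfl fun j _ => by rw [smul_mul_assoc]
  have hone : G (1 : ExteriorAlgebra ℝ (EuclideanSpace ℝ (Fin m))) = ((-1:ℝ) ^ m) • 1 := by
    rw [hG, Module.End.mul_apply, dList_one, map_smul, hlen, eps_apply, map_one]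
  refine LinearMap.ext fun x => ?_
  rw [LinearMap.smul_apply, Module.End.one_apply]
  rw [mulRight_of_iota_comm m G hGi x, hone, mul_smul_comm, mul_one]

lemma choose_arith : m * (m + 1) / 2 = m.choose 2 + m := by
  rw [Nat.choose_two_right]
  cases m with
  | zero => rfl
  | succ n =>
    have h1 : (n + 1) * (n + 1 + 1) = (n + 1) * n + 2 * (n + 1) := by ring
    rw [h1, Nat.add_mul_div_left _ _ (by norm_num : 0 < 2)]
    simp

lemma main_case :
    parityInvolution m * (cMonomial m Finset.univ * cHatMonomial m Finset.univ)
      = ((-1:ℝ) ^ (m * (m + 1) / 2)) •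
          (1 : Module.End ℝ (ExteriorAlgebra ℝ (EuclideanSpace ℝ (Fin m)))) := by
  have hlen : (Finset.univ.sort (· ≤ ·) : List (Fin m)).length = m := by
    rw [Finset.length_sort, Finset.card_univ, Fintype.card_fin]
  rw [cMonomial, cHatMonomial, interleave, hlen, mul_smul_comm, G_scalar, smul_smul,
    ← pow_add, choose_arith]

end Stmt8Aux

/-- Proposition 2.6: the supertrace of a Clifford monomial `c(e^I) ĉ(e^{I'})` vanishes
unless `I = I' = {1, …, m}`, where it equals `(-1)^{m(m+1)/2} 2^m`. -/
theorem stmt8 (m : ℕ) (I I' : Finset (Fin m)) :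
    str m (cMonomial m I * cHatMonomial m I')
      = if I = Finset.univ ∧ I' = Finset.univ
          then (-1 : ℝ) ^ (m * (m + 1) / 2) * 2 ^ m
          else 0 := by
  classical
  have hstr : ∀ A, str m A = LinearMap.trace ℝ _ (parityInvolution m * A) := fun A => rfl
  by_cases hmain : I = Finset.univ ∧ I' = Finset.univ
  · obtain ⟨h1, h2⟩ := hmain
    subst h1; subst h2
    rw [if_pos ⟨rfl, rfl⟩, hstr, Stmt8Aux.main_case m, map_smul,
      LinearMap.trace_one, Stmt8Aux.finrank_ext m]
    rw [smul_eq_mul]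
    push_cast
    ring
  · rw [if_neg hmain, hstr]
    rcases Nat.even_or_odd (I.card + I'.card) with hev | hod
    · have hcases : I ≠ Finset.univ ∨ I' ≠ Finset.univ := by
        by_contra hc
        push_neg at hc
        exact hmain ⟨hc.1, hc.2⟩
      have hXg : ∀ g : Module.End ℝ (ExteriorAlgebra ℝ (EuclideanSpace ℝ (Fin m))),
          (∀ j ∈ I, g * cOp m j = -(cOp m j * g)) →
          (∀ j ∈ I', g * cHatOp m j = -(cHatOp m j * g)) →
          g * (cMonomial m I * cHatMonomial m I')
            = (cMonomial m I * cHatMonomial m I') * g := by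
        intro g hc hh
        rw [Stmt8Aux.g_X m g I I' hc hh, hev.neg_one_pow, one_smul]
      rcases hcases with hI | hI'
      · obtain ⟨i, hi⟩ : ∃ i, i ∉ I := by
          by_contra hc
          push_neg at hc
          exact hI (Finset.eq_univ_iff_forall.mpr hc)
        have hgX := hXg (cOp m i)
          (fun j hj => Stmt8Aux.cc_anti m (fun he => hi (he ▸ hj)))
          (fun j _ => Stmt8Aux.ch_anti m i j)
        refine Stmt8Aux.trace_conj_zero (cOp m i)
          (parityInvolution m * (cMonomial m I * cHatMonomial m I')) (-1) (by norm_num) ?_ ?_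
        · rw [Stmt8Aux.c_sq m i, Stmt8Aux.E_neg_one_smul]
        · have hge : cOp m i * parityInvolution m = -(parityInvolution m * cOp m i) :=
            Stmt8Aux.flip_anti (Stmt8Aux.eps_c m i)
          rw [← mul_assoc, hge, Stmt8Aux.E_neg_mul, mul_assoc, hgX, ← mul_assoc]
      · obtain ⟨i, hi⟩ : ∃ i, i ∉ I' := by
          by_contra hc
          push_neg at hc
          exact hI' (Finset.eq_univ_iff_forall.mpr hc)
        have hgX := hXg (cHatOp m i)
          (fun j _ => Stmt8Aux.hc_anti m i j)
          (fun j hj => Stmt8Aux.hh_anti m (fun he => hi (he ▸ hj)))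
        refine Stmt8Aux.trace_conj_zero (cHatOp m i)
          (parityInvolution m * (cMonomial m I * cHatMonomial m I')) 1 one_ne_zero ?_ ?_
        · rw [Stmt8Aux.h_sq m i, one_smul]
        · have hge : cHatOp m i * parityInvolution m = -(parityInvolution m * cHatOp m i) :=
            Stmt8Aux.flip_anti (Stmt8Aux.eps_h m i)
          rw [← mul_assoc, hge, Stmt8Aux.E_neg_mul, mul_assoc, hgX, ← mul_assoc]
    · have hεX : parityInvolution m * (cMonomial m I * cHatMonomial m I')
          = -((cMonomial m I * cHatMonomial m I') * parityInvolution m) := by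
        rw [Stmt8Aux.g_X m _ I I' (fun j _ => Stmt8Aux.eps_c m j)
          (fun j _ => Stmt8Aux.eps_h m j), hod.neg_one_pow, Stmt8Aux.E_neg_one_smul]
      refine Stmt8Aux.trace_conj_zero (parityInvolution m)
        (parityInvolution m * (cMonomial m I * cHatMonomial m I')) 1 one_ne_zero ?_ ?_
      · rw [Stmt8Aux.eps_sq m, one_smul]
      · rw [← mul_assoc, Stmt8Aux.eps_sq m, one_mul, mul_assoc,
          Stmt8Aux.flip_anti hεX, Stmt8Aux.E_mul_neg, neg_neg, ← mul_assoc, Stmt8Aux.eps_sq m, one_mul]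

end
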